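/- Let n ≥ 1 and for N ∈ ℕ let σ_N denote the sum of the N largest values of (1 + ‖x‖²)^{−n/2} over x ∈ ℤⁿ (counted with multiplicity). Then lim_{N→∞} σ_N / log(N+1) = Ω_n / n, where Ω_n = 2π^{n/2}/Γ(n/2). (This computes the Dixmier trace of (1+Δ)^{−n/2} on the flat n-torus.) -/

import Mathlib

noncomputable section

open Filter Finset MeasureTheory Real Topology Asymptotics

section LogCesaro
private def Hsum (m : ℕ) : ℝ := ∑ j ∈ Finset.range m, ((j : ℝ) + 1)⁻¹

private lemma Hsum_eq (m : ℕ) : Hsum m = (harmonic m : ℝ) := by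
  rw [Hsum, harmonic]
  push_cast
  rfl

private lemma tendsto_Hsum_sub_log :
    Tendsto (fun m : ℕ => Hsum m - Real.log m) atTop (𝓝 Real.eulerMascheroniConstant) := by
  simpa only [Hsum_eq] using Real.tendsto_harmonic_sub_log

private lemma tendsto_log_nat : Tendsto (fun m : ℕ => Real.log m) atTop atTop :=
  Real.tendsto_log_atTop.comp tendsto_natCast_atTop_atTop

private lemma tendsto_Hsum_div_log :
    Tendsto (fun m : ℕ => Hsum m / Real.log m) atTop (𝓝 1) := by
  have h0 : Tendsto (fun m : ℕ => (Real.log m)⁻¹) atTop (𝓝 0) :=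
    tendsto_log_nat.inv_tendsto_atTop
  have h1 : Tendsto (fun m : ℕ => 1 + (Hsum m - Real.log m) * (Real.log m)⁻¹) atTop (𝓝 1) := by
    have := tendsto_Hsum_sub_log.mul h0
    rw [mul_zero] at this
    simpa using (tendsto_const_nhds (x := (1:ℝ))).add this
  refine h1.congr' ?_
  filter_upwards [tendsto_log_nat.eventually_gt_atTop 0] with m hm
  field_simp
  ring

private lemma tendsto_Hsum_atTop : Tendsto Hsum atTop atTop :=
  tendsto_Hsum_sub_log.add_atTop tendsto_log_nat |>.congr (fun m => by ring)

/-- log-weighted Cesàro -/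
lemma logCesaro (v : ℕ → ℝ) (L : ℝ) (hv : Filter.Tendsto v Filter.atTop (𝓝 L)) :
    Filter.Tendsto (fun m : ℕ => (∑ j ∈ Finset.range m, v j / ((j : ℝ) + 1)) / Real.log m)
      Filter.atTop (𝓝 L) := by
  set w : ℕ → ℝ := fun j => v j - L with hw_def
  have hw : Tendsto w atTop (𝓝 0) := by
    simpa [hw_def] using hv.sub (tendsto_const_nhds (x := L))
  have hlo : (fun j => w j * ((j : ℝ) + 1)⁻¹) =o[atTop] fun j => ((j : ℝ) + 1)⁻¹ := by
    have := ((isLittleO_one_iff ℝ).2 hw).mul_isBigO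
      (isBigO_refl (fun j : ℕ => ((j : ℝ) + 1)⁻¹) atTop)
    simpa using this
  have hsum : (fun m => ∑ j ∈ Finset.range m, w j * ((j : ℝ) + 1)⁻¹) =o[atTop] Hsum :=
    hlo.sum_range (fun j => by positivity) tendsto_Hsum_atTop
  have hdiv : Tendsto (fun m => (∑ j ∈ Finset.range m, w j * ((j : ℝ) + 1)⁻¹) / Hsum m)
      atTop (𝓝 0) := hsum.tendsto_div_nhds_zero
  have key : ∀ m : ℕ, (∑ j ∈ Finset.range m, v j / ((j : ℝ) + 1)) / Real.log m
      = L * (Hsum m / Real.log m)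
        + ((∑ j ∈ Finset.range m, w j * ((j : ℝ) + 1)⁻¹) / Hsum m) * (Hsum m / Real.log m) := by
    intro m
    have hsplit : (∑ j ∈ Finset.range m, v j / ((j : ℝ) + 1))
        = L * Hsum m + ∑ j ∈ Finset.range m, w j * ((j : ℝ) + 1)⁻¹ := by
      rw [Hsum, Finset.mul_sum, ← Finset.sum_add_distrib]
      refine Finset.sum_congr rfl fun j _ => ?_
      rw [hw_def]
      field_simp
      ring
    rcases eq_or_ne m 0 with rfl | hm
    · simp [Hsum]
    · have hH : Hsum m ≠ 0 := by
        have : 0 < Hsum m := by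
          rw [Hsum]
          apply Finset.sum_pos (fun j _ => by positivity)
          exact Finset.nonempty_range_iff.mpr hm
        exact this.ne'
      rw [hsplit]
      field_simp
  simp only [key]
  have := (tendsto_const_nhds (x := L)).mul tendsto_Hsum_div_log |>.add
    (hdiv.mul tendsto_Hsum_div_log)
  simpa using this

end LogCesaro

namespace Stmt13

variable (n : ℕ)

def Q (x : Fin n → ℤ) : ℕ := ∑ i, (x i).natAbs ^ 2

lemma cast_Q (x : Fin n → ℤ) : ((Q n x : ℝ)) = ∑ i, ((x i : ℝ)) ^ 2 := by
  unfold Q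
  push_cast [Nat.cast_natAbs]
  simp [sq_abs]

def A (m : ℕ) : Finset (Fin n → ℤ) :=
  (Fintype.piFinset fun _ : Fin n => Finset.Icc (-(m : ℤ)) m).filter fun x => Q n x ≤ m

lemma mem_A {m : ℕ} {x : Fin n → ℤ} : x ∈ A n m ↔ Q n x ≤ m := by
  unfold A
  simp only [Finset.mem_filter, Fintype.mem_piFinset, Finset.mem_Icc, and_iff_right_iff_imp]
  intro hq i
  have h1 : (x i).natAbs ^ 2 ≤ m := le_trans (Finset.single_le_sum (f := fun i => (x i).natAbs ^ 2)
    (fun _ _ => Nat.zero_le _) (Finset.mem_univ i)) hq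
  have h2 : (x i).natAbs ≤ m := le_trans (Nat.le_self_pow two_ne_zero _) h1
  have h3 : |x i| ≤ (m : ℤ) := by
    rw [Int.abs_eq_natAbs]; exact_mod_cast h2
  exact abs_le.mp h3

def C (m : ℕ) : ℕ := (A n m).card

lemma one_le_C (m : ℕ) : 1 ≤ C n m := by
  have : (0 : Fin n → ℤ) ∈ A n m := by simp [mem_A, Q]
  exact Finset.card_pos.mpr ⟨0, this⟩

lemma A_mono : Monotone (A n) := fun a b hab x hx => (mem_A n).mpr (le_trans ((mem_A n).mp hx) hab)

def V : ℝ := Real.pi ^ ((n : ℝ) / 2) / Real.Gamma ((n : ℝ) / 2 + 1)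

lemma V_pos (hn : 1 ≤ n) : 0 < V n :=
  div_pos (Real.rpow_pos_of_pos Real.pi_pos _)
    (Real.Gamma_pos_of_pos (by positivity))

def T (m : ℕ) : ℝ := ∑ x ∈ A n m, ((1 : ℝ) + Q n x) ^ (-(n : ℝ) / 2)

lemma C_mono : Monotone (C n) := fun a b hab => Finset.card_le_card (A_mono n hab)

lemma T_succ (m : ℕ) :
    T n (m + 1) = T n m + ((C n (m+1) : ℝ) - C n m) * ((m : ℝ) + 2) ^ (-(n : ℝ) / 2) := by
  have hsub : A n m ⊆ A n (m + 1) := A_mono n (Nat.le_succ m)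
  have key : ∑ x ∈ A n (m+1) \ A n m, ((1 : ℝ) + Q n x) ^ (-(n : ℝ) / 2)
      = ((C n (m+1) : ℝ) - C n m) * ((m : ℝ) + 2) ^ (-(n : ℝ) / 2) := by
    rw [Finset.sum_congr rfl (fun x hx => ?_), Finset.sum_const, Finset.card_sdiff_of_subset hsub,
      nsmul_eq_mul, Nat.cast_sub (Finset.card_le_card hsub)]
    · rfl
    · rw [Finset.mem_sdiff, mem_A, mem_A] at hx
      have : Q n x = m + 1 := le_antisymm hx.1 (Nat.succ_le_of_lt (Nat.lt_of_not_le hx.2))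
      rw [this]; norm_num; ring_nf
  have hsplit : T n (m+1) = (∑ x ∈ A n (m+1) \ A n m, ((1 : ℝ) + Q n x) ^ (-(n : ℝ) / 2)) + T n m :=
    (Finset.sum_sdiff hsub).symm
  rw [hsplit, key]; ring

lemma T_eq (m : ℕ) : T n m =
    (∑ j ∈ range m, (C n j : ℝ) * (((j : ℝ) + 1) ^ (-(n : ℝ) / 2) - ((j : ℝ) + 2) ^ (-(n : ℝ) / 2)))
      + (C n m : ℝ) * ((m : ℝ) + 1) ^ (-(n : ℝ) / 2) := by
  induction m with
  | zero =>
    simp only [range_zero, Finset.sum_empty, Nat.cast_zero, zero_add, zero_add]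
    rw [T, Finset.sum_congr rfl (fun x hx => ?_), Finset.sum_const, nsmul_eq_mul]
    · rfl
    · have : Q n x = 0 := Nat.le_zero.mp ((mem_A n).mp hx)
      rw [this]; norm_num
  | succ m ih =>
    rw [T_succ, ih, Finset.sum_range_succ]
    have h2 : ((m:ℝ) + 1 + 1) = (m:ℝ) + 2 := by ring
    push_cast [h2]
    ring

def cube (x : Fin n → ℤ) : Set (EuclideanSpace ℝ (Fin n)) :=
  (MeasurableEquiv.toLp 2 (Fin n → ℝ)).symm ⁻¹' (Set.univ.pi fun i => Set.Ico (x i : ℝ) (x i + 1))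

lemma mem_cube {x : Fin n → ℤ} {y : EuclideanSpace ℝ (Fin n)} :
    y ∈ cube n x ↔ ∀ i, (x i : ℝ) ≤ y i ∧ y i < x i + 1 := by
  simp [cube, MeasurableEquiv.toLp_symm_apply, Set.mem_pi]

lemma measurableSet_cube (x : Fin n → ℤ) : MeasurableSet (cube n x) :=
  (MeasurableSet.univ_pi fun _ => measurableSet_Ico).preimage
    (MeasurableEquiv.toLp 2 (Fin n → ℝ)).symm.measurable

lemma volume_cube (x : Fin n → ℤ) : volume (cube n x) = 1 := by
  rw [cube, (EuclideanSpace.volume_preserving_symm_measurableEquiv_toLp (Fin n)).measure_preimage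
    (MeasurableSet.univ_pi fun _ => measurableSet_Ico).nullMeasurableSet, volume_pi_pi]
  simp

lemma cube_disjoint : ∀ x ∈ (A n m : Set (Fin n → ℤ)), ∀ y ∈ (A n m : Set (Fin n → ℤ)),
    x ≠ y → Disjoint (cube n x) (cube n y) := by
  intro x _ y _ hxy
  rw [Set.disjoint_left]
  intro z hzx hzy
  apply hxy
  funext i
  have h1 := (mem_cube n).mp hzx i
  have h2 := (mem_cube n).mp hzy i
  have e1 : ⌊z i⌋ = x i := Int.floor_eq_iff.mpr ⟨h1.1, h1.2⟩
  have e2 : ⌊z i⌋ = y i := Int.floor_eq_iff.mpr ⟨h2.1, h2.2⟩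
  rw [← e1, e2]

lemma volume_biUnion (m : ℕ) :
    volume (⋃ x ∈ A n m, cube n x) = (C n m : ENNReal) := by
  rw [measure_biUnion_finset (cube_disjoint n) (fun x _ => measurableSet_cube n x)]
  simp [volume_cube, C]

def L (x : Fin n → ℤ) : EuclideanSpace ℝ (Fin n) :=
  (WithLp.equiv 2 (Fin n → ℝ)).symm (fun i => (x i : ℝ))

lemma L_apply (x : Fin n → ℤ) (i : Fin n) : L n x i = (x i : ℝ) := rfl

lemma norm_L (x : Fin n → ℤ) : ‖L n x‖ = Real.sqrt (Q n x) := by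
  rw [EuclideanSpace.norm_eq, cast_Q]
  congr 1
  refine Finset.sum_congr rfl fun i _ => ?_
  rw [L_apply, Real.norm_eq_abs, sq_abs]

lemma dist_le_of_mem_cube {x : Fin n → ℤ} {y : EuclideanSpace ℝ (Fin n)} (hy : y ∈ cube n x) :
    dist y (L n x) ≤ Real.sqrt n := by
  rw [EuclideanSpace.dist_eq]
  have h1 : ∀ i, dist (y i) (L n x i) ^ 2 ≤ 1 := by
    intro i
    obtain ⟨ha, hb⟩ := (mem_cube n).mp hy i
    rw [L_apply, Real.dist_eq]
    have : |y i - (x i : ℝ)| ≤ 1 := abs_le.mpr ⟨by linarith, by linarith⟩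
    calc |y i - (x i : ℝ)| ^ 2 ≤ 1 ^ 2 := by
          apply pow_le_pow_left₀ (abs_nonneg _) this
        _ = 1 := one_pow 2
  have hsum : ∑ i, dist (y i) (L n x i) ^ 2 ≤ (n : ℝ) := by
    calc ∑ i, dist (y i) (L n x i) ^ 2 ≤ ∑ _i : Fin n, (1 : ℝ) :=
          Finset.sum_le_sum (fun i _ => h1 i)
      _ = n := by simp
  exact Real.sqrt_le_sqrt hsum

lemma union_subset_ball (m : ℕ) :
    (⋃ x ∈ A n m, cube n x) ⊆ Metric.ball 0 (Real.sqrt m + (Real.sqrt n + 1)) := by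
  intro y hy
  simp only [Set.mem_iUnion] at hy
  obtain ⟨x, hxA, hyx⟩ := hy
  rw [Metric.mem_ball, dist_zero_right]
  have h1 : ‖y‖ ≤ ‖L n x‖ + dist y (L n x) := by
    rw [dist_eq_norm]
    calc ‖y‖ = ‖L n x + (y - L n x)‖ := by congr 1; abel
      _ ≤ ‖L n x‖ + ‖y - L n x‖ := norm_add_le _ _
  have h2 : ‖L n x‖ ≤ Real.sqrt m := by
    rw [norm_L]
    exact Real.sqrt_le_sqrt (by exact_mod_cast (mem_A n).mp hxA)
  have h3 := dist_le_of_mem_cube n hyx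
  have h4 : (0:ℝ) < 1 := one_pos
  linarith

lemma ball_subset_union (m : ℕ) :
    Metric.ball (0 : EuclideanSpace ℝ (Fin n)) (Real.sqrt m - Real.sqrt n)
      ⊆ ⋃ x ∈ A n m, cube n x := by
  intro y hy
  rw [Metric.mem_ball, dist_zero_right] at hy
  set x : Fin n → ℤ := fun i => ⌊y i⌋ with hx_def
  have hyx : y ∈ cube n x := by
    rw [mem_cube]
    intro i
    exact ⟨Int.floor_le _, Int.lt_floor_add_one _⟩
  have hxA : x ∈ A n m := by
    rw [mem_A]
    have h1 : ‖L n x‖ ≤ ‖y‖ + dist y (L n x) := by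
      rw [dist_eq_norm]
      calc ‖L n x‖ = ‖y - (y - L n x)‖ := by congr 1; abel
        _ ≤ ‖y‖ + ‖y - L n x‖ := norm_sub_le _ _
    have h2 := dist_le_of_mem_cube n hyx
    have h3 : ‖L n x‖ < Real.sqrt m := by linarith
    have h4 : Real.sqrt (Q n x) < Real.sqrt m := by rwa [norm_L] at h3
    have h5 : (Q n x : ℝ) < m := (Real.sqrt_lt_sqrt_iff (by positivity)).mp h4
    have h6 : Q n x < m := by exact_mod_cast h5
    exact h6.le
  exact Set.mem_biUnion hxA hyx

lemma ball_volume (hn : 1 ≤ n) (r : ℝ) (hr : 0 ≤ r) :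
    volume (Metric.ball (0 : EuclideanSpace ℝ (Fin n)) r) = ENNReal.ofReal (V n * r ^ n) := by
  haveI : Nonempty (Fin n) := ⟨⟨0, hn⟩⟩
  rw [EuclideanSpace.volume_ball]
  simp only [Fintype.card_fin]
  rw [← ENNReal.ofReal_pow hr, ← ENNReal.ofReal_mul' (by positivity)]
  congr 1
  have hpi : Real.sqrt π ^ n = π ^ ((n : ℝ) / 2) := by
    rw [Real.sqrt_eq_rpow, ← Real.rpow_natCast (π ^ ((1:ℝ)/2)) n,
      ← Real.rpow_mul Real.pi_pos.le]
    congr 1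
    ring
  rw [V, hpi]
  ring

lemma V_pos' (hn : 1 ≤ n) : 0 < V n :=
  div_pos (Real.rpow_pos_of_pos Real.pi_pos _)
    (Real.Gamma_pos_of_pos (by positivity))

lemma C_le (hn : 1 ≤ n) (m : ℕ) :
    (C n m : ℝ) ≤ V n * (Real.sqrt m + (Real.sqrt n + 1)) ^ n := by
  have hr : (0:ℝ) ≤ Real.sqrt m + (Real.sqrt n + 1) := by positivity
  have h : volume (⋃ x ∈ A n m, cube n x) ≤ volume
      (Metric.ball (0 : EuclideanSpace ℝ (Fin n)) (Real.sqrt m + (Real.sqrt n + 1))) :=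
    measure_mono (union_subset_ball n m)
  rw [volume_biUnion, ball_volume n hn _ hr] at h
  have h2 : ((C n m : ENNReal)) = ENNReal.ofReal ((C n m : ℝ)) := by
    rw [ENNReal.ofReal_natCast]
  rw [h2] at h
  have hV := (V_pos' n hn).le
  exact (ENNReal.ofReal_le_ofReal_iff (by positivity)).mp h

lemma le_C (hn : 1 ≤ n) (m : ℕ) (hm : Real.sqrt n ≤ Real.sqrt m) :
    V n * (Real.sqrt m - Real.sqrt n) ^ n ≤ (C n m : ℝ) := by
  have h : volume (Metric.ball (0 : EuclideanSpace ℝ (Fin n)) (Real.sqrt m - Real.sqrt n))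
      ≤ volume (⋃ x ∈ A n m, cube n x) :=
    measure_mono (ball_subset_union n m)
  rw [volume_biUnion, ball_volume n hn _ (by linarith)] at h
  have h2 : ((C n m : ENNReal)) = ENNReal.ofReal ((C n m : ℝ)) := by
    rw [ENNReal.ofReal_natCast]
  rw [h2] at h
  exact (ENNReal.ofReal_le_ofReal_iff (by positivity)).mp h

lemma rpow_half_nat {t : ℝ} (ht : 0 ≤ t) : t ^ ((n : ℝ) / 2) = Real.sqrt t ^ n := by
  rw [Real.sqrt_eq_rpow, ← Real.rpow_natCast (t ^ ((1:ℝ)/2)) n, ← Real.rpow_mul ht]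
  congr 1
  ring

lemma tendsto_ratio (c : ℝ) :
    Tendsto (fun m : ℕ => (Real.sqrt m + c) / Real.sqrt ((m : ℝ) + 1)) atTop (𝓝 1) := by
  have hsq : Tendsto (fun m : ℕ => Real.sqrt ((m : ℝ) + 1)) atTop atTop := by
    have hb : Tendsto (fun m : ℕ => (m : ℝ) + 1) atTop atTop :=
      tendsto_atTop_add_const_right _ 1 tendsto_natCast_atTop_atTop
    have := (tendsto_rpow_atTop (by norm_num : (0:ℝ) < 1/2)).comp hb
    refine this.congr fun m => ?_
    simp only [Function.comp_apply]
    rw [Real.sqrt_eq_rpow]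
  have h2 : Tendsto (fun m : ℕ => c / Real.sqrt ((m : ℝ) + 1)) atTop (𝓝 0) :=
    tendsto_const_nhds.div_atTop hsq
  have h1 : Tendsto (fun m : ℕ => Real.sqrt m / Real.sqrt ((m : ℝ) + 1)) atTop (𝓝 1) := by
    have hdiv : Tendsto (fun m : ℕ => (m : ℝ) / ((m : ℝ) + 1)) atTop (𝓝 1) := by
      have := tendsto_natCast_div_add_atTop (𝕜 := ℝ) 1
      exact this
    have hcont : Tendsto Real.sqrt (𝓝 1) (𝓝 1) := by
      simpa using Real.continuous_sqrt.tendsto 1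
    have := hcont.comp hdiv
    refine this.congr fun m => ?_
    simp only [Function.comp_apply]
    rw [Real.sqrt_div (Nat.cast_nonneg m)]
  have := h1.add h2
  rw [add_zero] at this
  refine this.congr fun m => ?_
  rw [← add_div]

lemma tendsto_C_div (hn : 1 ≤ n) :
    Tendsto (fun m : ℕ => (C n m : ℝ) / ((m : ℝ) + 1) ^ ((n : ℝ) / 2)) atTop (𝓝 (V n)) := by
  have hV := V_pos' n hn
  have hlow : Tendsto (fun m : ℕ =>
      V n * ((Real.sqrt m - Real.sqrt n) / Real.sqrt ((m : ℝ) + 1)) ^ n) atTop (𝓝 (V n)) := by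
    have := ((tendsto_ratio (-Real.sqrt n)).pow n).const_mul (V n)
    rw [one_pow, mul_one] at this
    refine this.congr fun m => ?_
    rw [sub_eq_add_neg]
  have hup : Tendsto (fun m : ℕ =>
      V n * ((Real.sqrt m + (Real.sqrt n + 1)) / Real.sqrt ((m : ℝ) + 1)) ^ n)
      atTop (𝓝 (V n)) := by
    have := ((tendsto_ratio (Real.sqrt n + 1)).pow n).const_mul (V n)
    rw [one_pow, mul_one] at this
    exact this
  refine tendsto_of_tendsto_of_tendsto_of_le_of_le' hlow hup ?_ ?_
  · filter_upwards [eventually_ge_atTop n] with m hm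
    have hmn : Real.sqrt n ≤ Real.sqrt m := Real.sqrt_le_sqrt (by exact_mod_cast hm)
    have hd : (0:ℝ) < ((m : ℝ) + 1) ^ ((n : ℝ) / 2) := by positivity
    have key : V n * ((Real.sqrt m - Real.sqrt n) / Real.sqrt ((m : ℝ) + 1)) ^ n
        = V n * (Real.sqrt m - Real.sqrt n) ^ n / ((m : ℝ) + 1) ^ ((n : ℝ) / 2) := by
      rw [rpow_half_nat n (by positivity), div_pow, mul_div_assoc]
    rw [key]
    gcongr
    exact le_C n hn m hmn
  · filter_upwards with m
    have hd : (0:ℝ) < ((m : ℝ) + 1) ^ ((n : ℝ) / 2) := by positivity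
    have key : V n * ((Real.sqrt m + (Real.sqrt n + 1)) / Real.sqrt ((m : ℝ) + 1)) ^ n
        = V n * (Real.sqrt m + (Real.sqrt n + 1)) ^ n / ((m : ℝ) + 1) ^ ((n : ℝ) / 2) := by
      rw [rpow_half_nat n (by positivity), div_pow, mul_div_assoc]
    rw [key]
    gcongr
    exact C_le n hn m


lemma tendsto_g_mul (hn : 1 ≤ n) :
    Tendsto (fun j : ℕ => (((j : ℝ) + 1) ^ (-(n : ℝ) / 2) - ((j : ℝ) + 2) ^ (-(n : ℝ) / 2))
      * ((j : ℝ) + 1) ^ ((n : ℝ) / 2 + 1)) atTop (𝓝 ((n : ℝ) / 2)) := by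
  simp only [neg_div]
  set s : ℝ := (n : ℝ) / 2 with hs_def
  have hn' : (0 : ℝ) < n := by exact_mod_cast hn
  have hs : 0 < s := by positivity
  have hderiv : HasDerivAt (fun t : ℝ => (1 + t) ^ (-s)) (-s) 0 := by
    have h1 : HasDerivAt (fun t : ℝ => 1 + t) 1 0 := (hasDerivAt_id 0).const_add 1
    have := h1.rpow_const (p := -s) (Or.inl (by norm_num))
    simpa using this
  have hslope := hasDerivAt_iff_tendsto_slope.mp hderiv
  have hu : Tendsto (fun j : ℕ => ((j : ℝ) + 1)⁻¹) atTop (𝓝[≠] 0) := by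
    apply tendsto_nhdsWithin_of_tendsto_nhds_of_eventually_within
    · simpa [one_div] using tendsto_one_div_add_atTop_nhds_zero_nat (𝕜 := ℝ)
    · exact Eventually.of_forall fun j => by
        simp only [Set.mem_compl_iff, Set.mem_singleton_iff]
        positivity
  have hcomp := (hslope.comp hu).neg
  rw [neg_neg] at hcomp
  refine hcomp.congr fun j => ?_
  have ha0 : (0 : ℝ) < (j : ℝ) + 1 := by positivity
  have hb0 : (0 : ℝ) < (j : ℝ) + 2 := by positivity
  have e1 : (1 : ℝ) + (((j : ℝ) + 1)⁻¹) = ((j : ℝ) + 2) / ((j : ℝ) + 1) := by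
    field_simp; ring
  have e2 : (((j : ℝ) + 2) / ((j : ℝ) + 1)) ^ (-s)
      = ((j : ℝ) + 2) ^ (-s) * ((j : ℝ) + 1) ^ s := by
    rw [Real.div_rpow hb0.le ha0.le, Real.rpow_neg ha0.le, div_eq_mul_inv, inv_inv]
  have e3 : ((j : ℝ) + 1) ^ (-s) * ((j : ℝ) + 1) ^ (s + 1) = (j : ℝ) + 1 := by
    rw [← Real.rpow_add ha0, show -s + (s + 1) = 1 by ring, Real.rpow_one]
  have e4 : ((j : ℝ) + 1) ^ s * ((j : ℝ) + 1) = ((j : ℝ) + 1) ^ (s + 1) := by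
    rw [Real.rpow_add ha0, Real.rpow_one]
  show -(slope (fun t : ℝ => (1 + t) ^ (-s)) 0 (((j : ℝ) + 1)⁻¹))
      = (((j : ℝ) + 1) ^ (-s) - ((j : ℝ) + 2) ^ (-s)) * ((j : ℝ) + 1) ^ (s + 1)
  rw [slope_def_field, e1, e2]
  norm_num
  rw [sub_mul, one_mul, neg_sub, mul_assoc, e4, sub_mul, e3]

lemma tendsto_log_nat : Tendsto (fun m : ℕ => Real.log m) atTop atTop :=
  Real.tendsto_log_atTop.comp tendsto_natCast_atTop_atTop

lemma tendsto_T_div (hn : 1 ≤ n) :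
    Tendsto (fun m : ℕ => T n m / Real.log m) atTop (𝓝 ((n : ℝ) / 2 * V n)) := by
  set g : ℕ → ℝ := fun j => ((j : ℝ) + 1) ^ (-(n : ℝ) / 2) - ((j : ℝ) + 2) ^ (-(n : ℝ) / 2)
    with hg_def
  set v : ℕ → ℝ := fun j => (C n j : ℝ) * g j * ((j : ℝ) + 1) with hv_def
  have hv : Tendsto v atTop (𝓝 (V n * ((n : ℝ) / 2))) := by
    have hmul := (tendsto_C_div n hn).mul (tendsto_g_mul n hn)
    refine hmul.congr fun j => ?_
    have hj : (0:ℝ) < (j : ℝ) + 1 := by positivity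
    have hXne : ((j : ℝ) + 1) ^ ((n : ℝ) / 2) ≠ 0 := by positivity
    have hsplit : ((j : ℝ) + 1) ^ ((n : ℝ) / 2 + 1)
        = ((j : ℝ) + 1) ^ ((n : ℝ) / 2) * ((j : ℝ) + 1) := by
      rw [Real.rpow_add hj, Real.rpow_one]
    rw [hv_def]
    simp only
    rw [hsplit]
    simp only [hg_def]
    field_simp
  have hU : Tendsto (fun m : ℕ => (∑ j ∈ range m, (C n j : ℝ) * g j) / Real.log m)
      atTop (𝓝 (V n * ((n : ℝ) / 2))) := by
    have := logCesaro v _ hv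
    refine this.congr fun m => ?_
    congr 1
    refine Finset.sum_congr rfl fun j _ => ?_
    have hj : ((j : ℝ) + 1) ≠ 0 := by positivity
    rw [hv_def]
    field_simp
  have hB : Tendsto (fun m : ℕ => (C n m : ℝ) * ((m : ℝ) + 1) ^ (-(n : ℝ) / 2) / Real.log m)
      atTop (𝓝 0) := by
    have hinv : Tendsto (fun m : ℕ => (Real.log m)⁻¹) atTop (𝓝 0) :=
      tendsto_log_nat.inv_tendsto_atTop
    have := (tendsto_C_div n hn).mul hinv
    rw [mul_zero] at this
    refine this.congr fun m => ?_
    have hm : (0:ℝ) ≤ (m : ℝ) + 1 := by positivity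
    rw [show (-(n : ℝ) / 2) = -((n : ℝ) / 2) from neg_div _ _, Real.rpow_neg hm]
    ring
  have := hU.add hB
  rw [add_zero] at this
  rw [show (n : ℝ) / 2 * V n = V n * ((n : ℝ) / 2) from mul_comm _ _]
  refine this.congr fun m => ?_
  rw [T_eq n m, add_div]

lemma tendsto_logC (hn : 1 ≤ n) :
    Tendsto (fun m : ℕ => Real.log ((C n m : ℝ) + 1) / Real.log m) atTop (𝓝 ((n : ℝ) / 2)) := by
  set s : ℝ := (n : ℝ) / 2 with hs_def
  have hn' : (0:ℝ) < n := by exact_mod_cast hn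
  have hs : 0 < s := by rw [hs_def]; positivity
  have hV := V_pos' n hn
  have hinvlog : Tendsto (fun m : ℕ => (Real.log m)⁻¹) atTop (𝓝 0) :=
    tendsto_log_nat.inv_tendsto_atTop
  have hpow : Tendsto (fun m : ℕ => ((m : ℝ) + 1) ^ s) atTop atTop := by
    refine (tendsto_rpow_atTop hs).comp ?_
    exact tendsto_atTop_add_const_right _ 1 tendsto_natCast_atTop_atTop
  have h1 : Tendsto (fun m : ℕ => ((C n m : ℝ) + 1) / ((m : ℝ) + 1) ^ s) atTop (𝓝 (V n)) := by
    have := (tendsto_C_div n hn).add hpow.inv_tendsto_atTop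
    rw [add_zero] at this
    refine this.congr fun m => ?_
    simp only [Pi.inv_apply]
    rw [add_div, one_div]
  have h2 : Tendsto (fun m : ℕ => Real.log (((C n m : ℝ) + 1) / ((m : ℝ) + 1) ^ s))
      atTop (𝓝 (Real.log (V n))) :=
    ((Real.continuousAt_log hV.ne').tendsto).comp h1
  have h3 : ∀ m : ℕ, Real.log (((C n m : ℝ) + 1) / ((m : ℝ) + 1) ^ s)
      = Real.log ((C n m : ℝ) + 1) - s * Real.log ((m : ℝ) + 1) := by
    intro m
    have hc : ((C n m : ℝ) + 1) ≠ 0 := by positivity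
    have hp : (0:ℝ) < (m : ℝ) + 1 := by positivity
    rw [Real.log_div hc (by positivity), Real.log_rpow hp]
  have hdelta : Tendsto (fun m : ℕ => Real.log ((m : ℝ) + 1) - Real.log m) atTop (𝓝 0) := by
    have hq : Tendsto (fun m : ℕ => ((m : ℝ) + 1) / m) atTop (𝓝 1) := by
      have hone : Tendsto (fun m : ℕ => 1 + 1 / (m : ℝ)) atTop (𝓝 1) := by
        have := tendsto_one_div_atTop_nhds_zero_nat (𝕜 := ℝ)
        have h := (tendsto_const_nhds (x := (1:ℝ))).add this
        rw [add_zero] at h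
        exact h
      refine hone.congr' ?_
      filter_upwards [eventually_ge_atTop 1] with m hm
      have : (m : ℝ) ≠ 0 := by positivity
      field_simp
    have := ((Real.continuousAt_log one_ne_zero).tendsto).comp hq
    rw [Real.log_one] at this
    refine this.congr' ?_
    filter_upwards [eventually_ge_atTop 1] with m hm
    have h0 : (0:ℝ) < m := by exact_mod_cast hm
    simp only [Function.comp_apply]
    rw [Real.log_div (by positivity) h0.ne']
  have hratio : Tendsto (fun m : ℕ => Real.log ((m : ℝ) + 1) / Real.log m) atTop (𝓝 1) := by
    have := hdelta.mul hinvlog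
    rw [mul_zero] at this
    have h := (tendsto_const_nhds (x := (1:ℝ))).add this
    rw [add_zero] at h
    refine h.congr' ?_
    filter_upwards [tendsto_log_nat.eventually_gt_atTop 0] with m hm
    field_simp
    ring
  have hE : Tendsto (fun m : ℕ => Real.log (((C n m : ℝ) + 1) / ((m : ℝ) + 1) ^ s) * (Real.log m)⁻¹)
      atTop (𝓝 0) := by
    have := h2.mul hinvlog
    rwa [mul_zero] at this
  have hcomb := (hratio.const_mul s).add hE
  rw [mul_one, add_zero] at hcomb
  refine hcomb.congr fun m => ?_
  have := h3 m
  rw [this]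
  ring

lemma tendsto_log_succ_div :
    Tendsto (fun m : ℕ => Real.log ((m : ℝ) + 1) / Real.log m) atTop (𝓝 1) := by
  have hinvlog : Tendsto (fun m : ℕ => (Real.log m)⁻¹) atTop (𝓝 0) :=
    tendsto_log_nat.inv_tendsto_atTop
  have hdelta : Tendsto (fun m : ℕ => Real.log ((m : ℝ) + 1) - Real.log m) atTop (𝓝 0) := by
    have hq : Tendsto (fun m : ℕ => ((m : ℝ) + 1) / m) atTop (𝓝 1) := by
      have hone : Tendsto (fun m : ℕ => 1 + 1 / (m : ℝ)) atTop (𝓝 1) := by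
        have := tendsto_one_div_atTop_nhds_zero_nat (𝕜 := ℝ)
        have h := (tendsto_const_nhds (x := (1:ℝ))).add this
        rw [add_zero] at h
        exact h
      refine hone.congr' ?_
      filter_upwards [eventually_ge_atTop 1] with m hm
      have : (m : ℝ) ≠ 0 := by positivity
      field_simp
    have := ((Real.continuousAt_log one_ne_zero).tendsto).comp hq
    rw [Real.log_one] at this
    refine this.congr' ?_
    filter_upwards [eventually_ge_atTop 1] with m hm
    have h0 : (0:ℝ) < m := by exact_mod_cast hm
    simp only [Function.comp_apply]
    rw [Real.log_div (by positivity) h0.ne']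
  have := hdelta.mul hinvlog
  rw [mul_zero] at this
  have h := (tendsto_const_nhds (x := (1:ℝ))).add this
  rw [add_zero] at h
  refine h.congr' ?_
  filter_upwards [tendsto_log_nat.eventually_gt_atTop 0] with m hm
  field_simp
  ring

lemma f_lt {x y : Fin n → ℤ} (hn : 1 ≤ n) (h : Q n x < Q n y) :
    ((1 : ℝ) + Q n y) ^ (-(n : ℝ) / 2) < ((1 : ℝ) + Q n x) ^ (-(n : ℝ) / 2) := by
  have hq : (Q n x : ℝ) < Q n y := by exact_mod_cast h
  have h0 : (0:ℝ) < n := by exact_mod_cast hn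
  exact Real.rpow_lt_rpow_of_neg (by positivity) (by linarith) (by linarith)

lemma f_le {x y : Fin n → ℤ} (hn : 1 ≤ n) (h : Q n x ≤ Q n y) :
    ((1 : ℝ) + Q n y) ^ (-(n : ℝ) / 2) ≤ ((1 : ℝ) + Q n x) ^ (-(n : ℝ) / 2) := by
  rcases h.lt_or_eq with h | h
  · exact (f_lt n hn h).le
  · rw [h]

lemma Q_le_of_f_le {x y : Fin n → ℤ} (hn : 1 ≤ n)
    (h : ((1 : ℝ) + Q n y) ^ (-(n : ℝ) / 2) ≤ ((1 : ℝ) + Q n x) ^ (-(n : ℝ) / 2)) :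
    Q n x ≤ Q n y := by
  by_contra hc
  exact absurd h (not_le.mpr (f_lt n hn (not_le.mp hc)))

lemma Q_lt_of_f_lt {x y : Fin n → ℤ} (hn : 1 ≤ n)
    (h : ((1 : ℝ) + Q n y) ^ (-(n : ℝ) / 2) < ((1 : ℝ) + Q n x) ^ (-(n : ℝ) / 2)) :
    Q n x < Q n y := by
  by_contra hc
  exact absurd h (not_lt.mpr (f_le n hn (not_lt.mp hc)))

lemma tendsto_G (hn : 1 ≤ n) :
    Tendsto (fun m : ℕ => T n (m + 1) / Real.log ((C n m : ℝ) + 1)) atTop (𝓝 (V n)) := by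
  have hn' : (0:ℝ) < n := by exact_mod_cast hn
  have hs : (0:ℝ) < (n : ℝ) / 2 := by positivity
  have hA : Tendsto (fun m : ℕ => T n (m + 1) / Real.log ((m : ℝ) + 1)) atTop
      (𝓝 ((n : ℝ) / 2 * V n)) := by
    have := (tendsto_T_div n hn).comp (tendsto_add_atTop_nat 1)
    refine this.congr fun m => ?_
    simp only [Function.comp_apply]
    push_cast
    rfl
  have hC : Tendsto (fun m : ℕ => Real.log m / Real.log ((C n m : ℝ) + 1)) atTop
      (𝓝 (((n : ℝ) / 2)⁻¹)) := by
    have := (tendsto_logC n hn).inv₀ hs.ne'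
    refine this.congr fun m => ?_
    rw [inv_div]
  have hprod := (hA.mul tendsto_log_succ_div).mul hC
  have hval : ((n : ℝ) / 2 * V n) * 1 * ((n : ℝ) / 2)⁻¹ = V n := by
    field_simp
  rw [hval] at hprod
  refine hprod.congr' ?_
  filter_upwards [eventually_ge_atTop 2] with m hm
  have h1 : Real.log m ≠ 0 := by
    have : (1:ℝ) < m := by exact_mod_cast hm
    exact (Real.log_pos this).ne'
  have h2 : Real.log ((m : ℝ) + 1) ≠ 0 := by
    have : (1:ℝ) < (m : ℝ) + 1 := by
      have : (1:ℝ) ≤ m := by exact_mod_cast le_trans one_le_two hm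
      linarith
    exact (Real.log_pos this).ne'
  field_simp

lemma tendsto_G' (hn : 1 ≤ n) :
    Tendsto (fun m : ℕ => T n m / Real.log ((C n (m + 1) : ℝ) + 1)) atTop (𝓝 (V n)) := by
  have hn' : (0:ℝ) < n := by exact_mod_cast hn
  have hs : (0:ℝ) < (n : ℝ) / 2 := by positivity
  have hB : Tendsto (fun m : ℕ => Real.log m / Real.log ((m : ℝ) + 1)) atTop (𝓝 1) := by
    have := tendsto_log_succ_div.inv₀ one_ne_zero
    rw [inv_one] at this
    refine this.congr fun m => ?_
    rw [inv_div]
  have hC : Tendsto (fun m : ℕ => Real.log ((m : ℝ) + 1) / Real.log ((C n (m + 1) : ℝ) + 1))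
      atTop (𝓝 (((n : ℝ) / 2)⁻¹)) := by
    have h0 := ((tendsto_logC n hn).comp (tendsto_add_atTop_nat 1)).inv₀ hs.ne'
    refine h0.congr fun m => ?_
    simp only [Function.comp_apply]
    rw [inv_div]
    push_cast
    rfl
  have hprod := ((tendsto_T_div n hn).mul hB).mul hC
  have hval : ((n : ℝ) / 2 * V n) * 1 * ((n : ℝ) / 2)⁻¹ = V n := by
    field_simp
  rw [hval] at hprod
  refine hprod.congr' ?_
  filter_upwards [eventually_ge_atTop 2] with m hm
  have h1 : Real.log m ≠ 0 := by
    have : (1:ℝ) < m := by exact_mod_cast hm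
    exact (Real.log_pos this).ne'
  have h2 : Real.log ((m : ℝ) + 1) ≠ 0 := by
    have h3 : (1:ℝ) ≤ m := by exact_mod_cast le_trans one_le_two hm
    exact (Real.log_pos (by linarith)).ne'
  field_simp


lemma V_eq (hn : 1 ≤ n) :
    2 * Real.pi ^ ((n : ℝ) / 2) / Real.Gamma ((n : ℝ) / 2) / n = V n := by
  have hn' : (0:ℝ) < n := by exact_mod_cast hn
  have hs : (0:ℝ) < (n : ℝ) / 2 := by positivity
  have hG : Real.Gamma ((n : ℝ) / 2 + 1) = ((n : ℝ) / 2) * Real.Gamma ((n : ℝ) / 2) :=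
    Real.Gamma_add_one hs.ne'
  have hGpos : 0 < Real.Gamma ((n : ℝ) / 2) := Real.Gamma_pos_of_pos hs
  rw [V, hG]
  field_simp

section Final
variable (e : ℕ ≃ (Fin n → ℤ))

lemma tendsto_phi (hanti : Antitone fun k => ((1 : ℝ) + Q n (e k)) ^ (-(n : ℝ) / 2)) :
    Tendsto (fun N : ℕ => Q n (e (N - 1))) atTop atTop := by
  rw [tendsto_atTop]
  intro B
  have hfin : Set.Finite {k : ℕ | Q n (e k) ≤ B} := by
    have : {k : ℕ | Q n (e k) ≤ B} = (fun k => e k) ⁻¹' (A n B : Set (Fin n → ℤ)) := by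
      ext k; simp [mem_A]
    rw [this]
    exact Set.Finite.preimage (e.injective.injOn) (A n B).finite_toSet
  obtain ⟨K, hK⟩ := hfin.bddAbove
  rw [eventually_atTop]
  refine ⟨K + 2, fun N hN => ?_⟩
  by_contra hc
  push_neg at hc
  have : N - 1 ∈ {k : ℕ | Q n (e k) ≤ B} := le_of_lt hc
  have := hK this
  omega

theorem final (hn : 1 ≤ n) (hanti : Antitone fun k => (1 + ∑ i, ((e k i : ℝ)) ^ 2) ^ (-(n : ℝ) / 2)) :
    Filter.Tendsto
      (fun N : ℕ =>
        (∑ k ∈ Finset.range N, (1 + ∑ i, ((e k i : ℝ)) ^ 2) ^ (-(n : ℝ) / 2)) /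
          Real.log (N + 1))
      Filter.atTop
      (nhds (2 * Real.pi ^ ((n : ℝ) / 2) / Real.Gamma ((n : ℝ) / 2) / n)) := by
  rw [V_eq n hn]
  have hcast : ∀ k : ℕ, (1 + ∑ i, ((e k i : ℝ)) ^ 2) = ((1 : ℝ) + Q n (e k)) := by
    intro k; rw [cast_Q]
  simp only [hcast]
  have hanti' : Antitone fun k => ((1 : ℝ) + Q n (e k)) ^ (-(n : ℝ) / 2) := by
    have h := hanti
    simp only [hcast] at h
    exact h
  set φ : ℕ → ℕ := fun N => Q n (e (N - 1)) with hφ_def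
  have hφ : Tendsto φ atTop atTop := tendsto_phi n e hanti'
  set ψ : ℕ → ℕ := fun N => φ N - 1 with hψ_def
  have hψ : Tendsto ψ atTop atTop := (tendsto_sub_atTop_nat 1).comp hφ
  set σ : ℕ → ℝ := fun N => ∑ k ∈ Finset.range N, ((1 : ℝ) + Q n (e k)) ^ (-(n : ℝ) / 2)
    with hσ_def
  -- key bounds
  have key : ∀ N : ℕ, 1 ≤ N → 1 ≤ φ N →
      (T n (ψ N) ≤ σ N ∧ σ N ≤ T n (φ N) ∧ C n (ψ N) ≤ N ∧ N ≤ C n (φ N)) := by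
    intro N hN1 hφ1
    set img : Finset (Fin n → ℤ) := (Finset.range N).image (fun k => e k) with himg_def
    have hsum_img : ∑ x ∈ img, ((1 : ℝ) + Q n x) ^ (-(n : ℝ) / 2) = σ N := by
      rw [himg_def, Finset.sum_image (fun a _ b _ h => e.injective h)]
    have hcard_img : img.card = N := by
      rw [himg_def, Finset.card_image_of_injective _ e.injective, Finset.card_range]
    have hsub1 : img ⊆ A n (φ N) := by
      intro x hx
      rw [himg_def, Finset.mem_image] at hx
      obtain ⟨k, hk, rfl⟩ := hx
      rw [Finset.mem_range] at hk
      rw [mem_A]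
      have hkle : N - 1 ≤ N - 1 := le_refl _
      have : ((1 : ℝ) + Q n (e (N - 1))) ^ (-(n : ℝ) / 2)
          ≤ ((1 : ℝ) + Q n (e k)) ^ (-(n : ℝ) / 2) := hanti' (by omega)
      exact Q_le_of_f_le n hn this
    have hsub2 : A n (ψ N) ⊆ img := by
      intro x hx
      rw [mem_A] at hx
      have hψeq : ψ N = φ N - 1 := rfl
      have hQx : Q n x < φ N := by omega
      have hflt : ((1 : ℝ) + Q n (e (N - 1))) ^ (-(n : ℝ) / 2)
          < ((1 : ℝ) + Q n x) ^ (-(n : ℝ) / 2) := f_lt n hn hQx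
      set k := e.symm x with hk_def
      have hxk : e k = x := e.apply_symm_apply x
      rw [← hxk] at hflt
      have hkN : k < N := by
        by_contra hc
        push_neg at hc
        have : ((1 : ℝ) + Q n (e k)) ^ (-(n : ℝ) / 2)
            ≤ ((1 : ℝ) + Q n (e (N - 1))) ^ (-(n : ℝ) / 2) := hanti' (by omega)
        linarith
      rw [himg_def, Finset.mem_image]
      exact ⟨k, Finset.mem_range.mpr hkN, hxk⟩
    have hf_nonneg : ∀ x : Fin n → ℤ, (0:ℝ) ≤ ((1 : ℝ) + Q n x) ^ (-(n : ℝ) / 2) :=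
      fun x => Real.rpow_nonneg (by positivity) _
    refine ⟨?_, ?_, ?_, ?_⟩
    · rw [← hsum_img]
      exact Finset.sum_le_sum_of_subset_of_nonneg hsub2 (fun x _ _ => hf_nonneg x)
    · rw [← hsum_img]
      exact Finset.sum_le_sum_of_subset_of_nonneg hsub1 (fun x _ _ => hf_nonneg x)
    · have := Finset.card_le_card hsub2
      rwa [hcard_img] at this
    · have := Finset.card_le_card hsub1
      rwa [hcard_img] at this
  -- limits of bounds
  have hub : Tendsto (fun N => T n (ψ N + 1) / Real.log ((C n (ψ N) : ℝ) + 1)) atTop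
      (𝓝 (V n)) := (tendsto_G n hn).comp hψ
  have hlb : Tendsto (fun N => T n (ψ N) / Real.log ((C n (ψ N + 1) : ℝ) + 1)) atTop
      (𝓝 (V n)) := (tendsto_G' n hn).comp hψ
  refine tendsto_of_tendsto_of_tendsto_of_le_of_le' hlb hub ?_ ?_
  · filter_upwards [eventually_ge_atTop 1, hφ.eventually_ge_atTop 1] with N hN1 hφ1
    obtain ⟨k1, k2, k3, k4⟩ := key N hN1 hφ1
    have hψ1 : ψ N + 1 = φ N := by simp only [hψ_def]; omega
    rw [hψ1]
    have hσnn : 0 ≤ σ N := Finset.sum_nonneg fun k _ => Real.rpow_nonneg (by positivity) _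
    have hlogN : 0 < Real.log ((N : ℝ) + 1) := Real.log_pos (by
      have : (1:ℝ) ≤ N := by exact_mod_cast hN1
      linarith)
    have hlogC : Real.log ((N : ℝ) + 1) ≤ Real.log ((C n (φ N) : ℝ) + 1) := by
      apply Real.log_le_log (by positivity)
      have : (N : ℝ) ≤ (C n (φ N) : ℝ) := by exact_mod_cast k4
      linarith
    exact div_le_div₀ hσnn k1 hlogN hlogC
  · filter_upwards [eventually_ge_atTop 1, hφ.eventually_ge_atTop 1] with N hN1 hφ1
    obtain ⟨k1, k2, k3, k4⟩ := key N hN1 hφ1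
    have hψ1 : ψ N + 1 = φ N := by simp only [hψ_def]; omega
    rw [hψ1]
    have hTnn : 0 ≤ T n (φ N) :=
      Finset.sum_nonneg fun x _ => Real.rpow_nonneg (by positivity) _
    have hlogC : 0 < Real.log ((C n (ψ N) : ℝ) + 1) := Real.log_pos (by
      have : (1:ℝ) ≤ (C n (ψ N) : ℝ) := by exact_mod_cast one_le_C n (ψ N)
      linarith)
    have hlogN : Real.log ((C n (ψ N) : ℝ) + 1) ≤ Real.log ((N : ℝ) + 1) := by
      apply Real.log_le_log (by positivity)
      have : (C n (ψ N) : ℝ) ≤ (N : ℝ) := by exact_mod_cast k3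
      linarith
    exact div_le_div₀ hTnn k2 hlogC hlogN

end Final

end Stmt13

/-- if `e` enumerates `ℤⁿ` so that `(1 + ‖x‖²)^{-n/2}` is arranged in
decreasing order, then the partial sums `σ_N` of the `N` largest values satisfy
`σ_N / log(N+1) → Ω_n/n` with `Ω_n = 2π^{n/2}/Γ(n/2)`; this computes the Dixmier
trace of `(1 + Δ)^{-n/2}` on the flat `n`-torus. -/
theorem stmt_13 (n : ℕ) (hn : 1 ≤ n) (e : ℕ ≃ (Fin n → ℤ))
    (hanti : Antitone fun k => (1 + ∑ i, ((e k i : ℝ)) ^ 2) ^ (-(n : ℝ) / 2)) :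
    Filter.Tendsto
      (fun N : ℕ =>
        (∑ k ∈ Finset.range N, (1 + ∑ i, ((e k i : ℝ)) ^ 2) ^ (-(n : ℝ) / 2)) /
          Real.log (N + 1))
      Filter.atTop
      (nhds (2 * Real.pi ^ ((n : ℝ) / 2) / Real.Gamma ((n : ℝ) / 2) / n)) :=
  Stmt13.final n e hn hanti
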